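/- Let S be an (ε, δ)-stable set with respect to a distribution X with mean μ_X, for ε, δ > 0 with δ at least a sufficiently large constant multiple of ε and ε sufficiently small. Let T be an ε-corrupted version of S and suppose Cov[T] has largest eigenvalue 1+λ with λ > 8δ²/ε. Let v be the top unit eigenvector of Cov[T], g(x) = (v·(x-μ_T))², and L the ε|T| elements of T with largest g-value. Define f(x) = g(x) for x ∈ L and f(x) = 0 otherwise. Then Σ_{x∈T} f(x) ≥ 2·Σ_{x∈T∩S} f(x). -/

import Mathlib

open Finset
open scoped RealInnerProductSpace Classical

noncomputable def emean {d : ℕ} (A : Finset (EuclideanSpace ℝ (Fin d))) :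
    EuclideanSpace ℝ (Fin d) :=
  (A.card : ℝ)⁻¹ • ∑ x ∈ A, x

def IsStable {d : ℕ} (ε δ : ℝ) (S : Finset (EuclideanSpace ℝ (Fin d)))
    (μX : EuclideanSpace ℝ (Fin d)) : Prop :=
  ∀ v : EuclideanSpace ℝ (Fin d), ‖v‖ = 1 →
    ∀ S' ⊆ S, (1 - ε) * (S.card : ℝ) ≤ (S'.card : ℝ) →
      |(S'.card : ℝ)⁻¹ * ∑ x ∈ S', ⟪v, x - μX⟫| ≤ δ ∧
      |(S'.card : ℝ)⁻¹ * ∑ x ∈ S', ⟪v, x - μX⟫ ^ 2 - 1| ≤ δ ^ 2 / ε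

lemma abs_scaled9 {c x δ : ℝ} (hc : 0 < c) (h : |c⁻¹ * x| ≤ δ) : |x| ≤ δ * c := by
  rw [abs_mul, abs_inv, abs_of_pos hc] at h
  have h2 : c * (c⁻¹ * |x|) ≤ c * δ := mul_le_mul_of_nonneg_left h hc.le
  rw [← mul_assoc, mul_inv_cancel₀ hc.ne', one_mul] at h2
  linarith

lemma second_scaled9 {c y σ : ℝ} (hc : 0 < c) (h : |c⁻¹ * y - 1| ≤ σ) :
    c * (1 - σ) ≤ y ∧ y ≤ c * (1 + σ) := by
  obtain ⟨h1, h2⟩ := abs_le.mp h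
  have hd : c⁻¹ * y = y / c := by ring
  rw [hd] at h1 h2
  constructor
  · have := (le_div_iff₀ hc).mp (by linarith : 1 - σ ≤ y / c); linarith
  · have := (div_le_iff₀ hc).mp (by linarith : y / c ≤ 1 + σ); linarith

lemma a2_bound9 {M N ε lam δ aa : ℝ} (hN : 0 < N) (hM : (1 - ε) * N ≤ M)
    (hε : 0 < ε) (hε₀ : ε ≤ 1 / 1000) (hlam : 0 < 1 + lam)
    (h : (M * aa) ^ 2 ≤ 2 * (δ * M) ^ 2 + 2 * (ε * N * (N * (1 + lam)))) :
    aa ^ 2 ≤ 2 * δ ^ 2 + 3 * ε * (1 + lam) := by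
  have hM0 : 0 < M := lt_of_lt_of_le (mul_pos (by linarith) hN) hM
  have h9 : (999 / 1000) * N ≤ M := by
    nlinarith [mul_nonneg (by linarith : (0:ℝ) ≤ 1 / 1000 - ε) hN.le]
  have hM2 : (999 / 1000) ^ 2 * N ^ 2 ≤ M ^ 2 := by
    nlinarith [mul_le_mul h9 h9 (by positivity) (le_trans (by positivity) h9)]
  have key : 2 * (ε * (1 + lam)) * N ^ 2 ≤ 3 * (ε * (1 + lam)) * M ^ 2 := by
    nlinarith [mul_le_mul_of_nonneg_left hM2 (mul_nonneg hε.le hlam.le),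
      mul_nonneg (mul_nonneg hε.le hlam.le) (sq_nonneg N)]
  have final : aa ^ 2 * M ^ 2 ≤ (2 * δ ^ 2 + 3 * ε * (1 + lam)) * M ^ 2 := by nlinarith
  exact le_of_mul_le_mul_right final (pow_pos hM0 2)

lemma X2_bound9 {bc n ε lam X Bb2 : ℝ} (h1 : X ^ 2 ≤ bc * Bb2) (h2 : Bb2 ≤ n * (1 + lam))
    (h3 : 0 ≤ Bb2) (h4 : bc ≤ ε * n) (h5 : 0 ≤ ε) (h6 : 0 ≤ n) :
    X ^ 2 ≤ ε * n * (n * (1 + lam)) := by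
  nlinarith [mul_le_mul h4 h2 h3 (mul_nonneg h5 h6)]

lemma ma2_bound9 {Ma sA X dM eT : ℝ} (h : Ma = sA + X) (h1 : sA ^ 2 ≤ dM ^ 2)
    (h2 : X ^ 2 ≤ eT) : Ma ^ 2 ≤ 2 * dM ^ 2 + 2 * eT := by
  rw [h]; nlinarith [sq_nonneg (sA - X)]

lemma TSb_up9 {TSb sA2 ca m n σ2 δ α a2 : ℝ} (hexp : TSb = sA2 + ca + m * a2)
    (h1 : sA2 ≤ m * (1 + σ2)) (h2 : ca ≤ 2 * α * (δ * m)) (hmn : m ≤ n)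
    (hσ : 0 ≤ σ2) (hδ : 0 ≤ δ) (hα : 0 ≤ α) (ha2 : 0 ≤ a2) :
    TSb ≤ n * (1 + σ2 + 2 * δ * α + a2) := by
  have hbr : (0:ℝ) ≤ 1 + σ2 + 2 * δ * α + a2 := by positivity
  nlinarith [mul_le_mul_of_nonneg_right hmn hbr]

lemma ptwise9 (u a : ℝ) : (u - a) ^ 2 ≤ (9 / 8) * u ^ 2 + 9 * a ^ 2 := by
  nlinarith [sq_nonneg (u + 8 * a)]

lemma final9 {ε δ lam n aα a2 Rb Bb : ℝ}
    (hε : 0 < ε) (hε₀ : ε ≤ 1 / 1000) (hδ : 10 * ε ≤ δ) (hn : 0 < n)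
    (hlam : 8 * (δ ^ 2 / ε) < lam)
    (hRb : Rb ≤ (9 / 8) * (2 * (δ ^ 2 / ε) * n + ε * n) + ε * n * (9 * a2))
    (hBb : n * lam - n * (δ ^ 2 / ε + 2 * δ * aα + a2) ≤ Bb)
    (hα : 0 ≤ aα) (ha2e : a2 = aα ^ 2)
    (ha2 : a2 ≤ 2 * δ ^ 2 + 3 * ε * (1 + lam)) :
    2 * Rb ≤ Bb := by
  have hδ0 : 0 < δ := lt_of_lt_of_le (by linarith) hδ
  set σ2 : ℝ := δ ^ 2 / ε with hσ2_def
  have hσ2pos : 0 < σ2 := div_pos (pow_pos hδ0 2) hε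
  have hδ2 : δ ^ 2 = σ2 * ε := by rw [hσ2_def, div_mul_cancel₀ _ hε.ne']
  have hlampos : 0 < lam := by nlinarith
  have h100 : 100 * ε ≤ σ2 := by
    have h1 : (100 * ε) * ε ≤ σ2 * ε := by nlinarith
    exact le_of_mul_le_mul_right h1 hε
  have ha20 : 0 ≤ a2 := ha2e ▸ sq_nonneg aα
  have hcross : 2 * δ * aα ≤ 4 * δ ^ 2 + a2 / 4 := by
    rw [ha2e]; nlinarith [sq_nonneg (2 * δ - aα / 2)]
  have hεa2 : ε * a2 ≤ (1 / 1000) * a2 := mul_le_mul_of_nonneg_right hε₀ ha20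
  have hεσ : ε * σ2 ≤ (1 / 1000) * σ2 := mul_le_mul_of_nonneg_right hε₀ hσ2pos.le
  have hεlam : ε * lam ≤ (1 / 1000) * lam := mul_le_mul_of_nonneg_right hε₀ hlampos.le
  have P : (9 / 4) * (2 * σ2 + ε) + 18 * (ε * a2) + (σ2 + 2 * δ * aα + a2) ≤ lam := by
    nlinarith [h100, hcross, hεa2, hεσ, hεlam, ha2, hδ2, ha20, hσ2pos, hlampos, hε]
  nlinarith [mul_le_mul_of_nonneg_left P hn.le, hRb, hBb]

set_option maxHeartbeats 2000000 in
/-- Universal filter: with `v` the top eigenvector of `Cov[T]`, `g(x) = (v·(x-μ_T))²`,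
and `L` the `ε|T|` elements of `T` with largest `g`-value, the function `f = g·1_L`
satisfies `Σ_{x∈T} f(x) ≥ 2·Σ_{x∈T∩S} f(x)`. -/
theorem stmt9 :
    ∃ c ε₀ : ℝ, 0 < c ∧ 0 < ε₀ ∧ ∀ (d : ℕ) (ε δ lam : ℝ)
      (S T L : Finset (EuclideanSpace ℝ (Fin d)))
      (μX v : EuclideanSpace ℝ (Fin d)),
      0 < ε → ε ≤ ε₀ → c * ε ≤ δ →
      IsStable ε δ S μX →
      T.card = S.card → (1 - ε) * (S.card : ℝ) ≤ ((T ∩ S).card : ℝ) →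
      ‖v‖ = 1 → 8 * δ ^ 2 / ε < lam →
      (T.card : ℝ)⁻¹ * ∑ x ∈ T, ⟪v, x - emean T⟫ ^ 2 = 1 + lam →
      (∀ w : EuclideanSpace ℝ (Fin d), ‖w‖ = 1 →
        (T.card : ℝ)⁻¹ * ∑ x ∈ T, ⟪w, x - emean T⟫ ^ 2 ≤ 1 + lam) →
      L ⊆ T → (L.card : ℝ) = ε * (T.card : ℝ) →
      (∀ x ∈ L, ∀ y ∈ T \ L, ⟪v, y - emean T⟫ ^ 2 ≤ ⟪v, x - emean T⟫ ^ 2) →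
      2 * ∑ x ∈ T ∩ S, (if x ∈ L then ⟪v, x - emean T⟫ ^ 2 else 0) ≤
        ∑ x ∈ T, (if x ∈ L then ⟪v, x - emean T⟫ ^ 2 else 0) := by
  refine ⟨10, 1/1000, by norm_num, by norm_num, ?_⟩
  intro d ε δ lam S T L μX v hε hε₀ hcδ hstab hTS hTScard hv hlam hvar _htop hLT hLcard hLtop
  rcases Finset.eq_empty_or_nonempty T with hTe | hTne
  · simp [hTe]
  rw [Finset.sum_ite_mem, Finset.sum_ite_mem, Finset.inter_eq_right.mpr hLT]
  -- basic scalars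
  have hn : (0:ℝ) < (T.card : ℝ) := by exact_mod_cast Finset.card_pos.mpr hTne
  have hSn : ((S.card : ℕ) : ℝ) = (T.card : ℝ) := by exact_mod_cast congrArg Nat.cast hTS.symm
  have hδ0 : 0 < δ := lt_of_lt_of_le (by linarith) hcδ
  have hσ2pos : 0 < δ ^ 2 / ε := div_pos (pow_pos hδ0 2) hε
  have hlam' : 8 * (δ ^ 2 / ε) < lam := by rw [← mul_div_assoc]; exact hlam
  have hlampos : 0 < lam := by nlinarith
  -- sets
  have hRS : (T ∩ S) ∩ L ⊆ S := fun x hx => (Finset.mem_inter.mp ((Finset.mem_inter.mp hx).1)).2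
  have hRL : (T ∩ S) ∩ L ⊆ L := Finset.inter_subset_right
  -- cards
  have hm1 : (1 - ε) * (T.card : ℝ) ≤ ((T ∩ S).card : ℝ) := by rw [← hSn]; exact hTScard
  have hm0 : (0:ℝ) < ((T ∩ S).card : ℝ) := by nlinarith
  have hmn : ((T ∩ S).card : ℝ) ≤ (T.card : ℝ) := by
    exact_mod_cast Finset.card_le_card (Finset.inter_subset_left (s₁ := T) (s₂ := S))
  have hmbc : ((T ∩ S).card : ℝ) + ((T \ S).card : ℝ) = (T.card : ℝ) := by
    exact_mod_cast Finset.card_inter_add_card_sdiff T S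
  have hrc0 : (0:ℝ) ≤ (((T ∩ S) ∩ L).card : ℝ) := by positivity
  have hrcL : (((T ∩ S) ∩ L).card : ℝ) ≤ ε * (T.card : ℝ) := by
    rw [← hLcard]; exact_mod_cast Finset.card_le_card hRL
  have hbcε : ((T \ S).card : ℝ) ≤ ε * (T.card : ℝ) := by nlinarith
  -- stability
  obtain ⟨hA1, hA2⟩ := hstab v hv (T ∩ S) Finset.inter_subset_right hTScard
  obtain ⟨_, hS2⟩ := hstab v hv S (Finset.Subset.refl S) (by nlinarith)
  have hSRcard : (((S \ ((T ∩ S) ∩ L)).card : ℕ) : ℝ) = (S.card : ℝ) - (((T ∩ S) ∩ L).card : ℝ) := by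
    rw [Finset.card_sdiff_of_subset hRS]
    have := Finset.card_le_card hRS
    push_cast [this]; ring
  obtain ⟨_, hC2⟩ := hstab v hv (S \ ((T ∩ S) ∩ L)) Finset.sdiff_subset
    (by rw [hSRcard, hSn]; nlinarith)
  -- scalar consequences
  have hsA_bd : |∑ x ∈ T ∩ S, ⟪v, x - μX⟫| ≤ δ * ((T ∩ S).card : ℝ) := abs_scaled9 hm0 hA1
  have hsA2_bd := second_scaled9 hm0 hA2
  have hS2' := second_scaled9 (by rw [hSn]; exact hn) hS2
  have hC2' := second_scaled9 (by rw [hSRcard, hSn]; nlinarith) hC2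
  -- K = sum over R of u^2, bounded
  have hsplitS : (∑ x ∈ S \ ((T ∩ S) ∩ L), ⟪v, x - μX⟫ ^ 2) + ∑ x ∈ (T ∩ S) ∩ L, ⟪v, x - μX⟫ ^ 2
      = ∑ x ∈ S, ⟪v, x - μX⟫ ^ 2 := Finset.sum_sdiff hRS
  have hK0 : (0:ℝ) ≤ ∑ x ∈ (T ∩ S) ∩ L, ⟪v, x - μX⟫ ^ 2 :=
    Finset.sum_nonneg fun x _ => sq_nonneg _
  have hK_bd : ∑ x ∈ (T ∩ S) ∩ L, ⟪v, x - μX⟫ ^ 2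
      ≤ 2 * (δ ^ 2 / ε) * (T.card : ℝ) + ε * (T.card : ℝ) := by
    have h1 := hS2'.2
    have h2 := hC2'.1
    rw [hSn] at h1
    rw [hSRcard, hSn] at h2
    nlinarith [mul_nonneg hrc0 hσ2pos.le]
  -- mean identity
  set a : ℝ := ⟪v, emean T - μX⟫ with ha_def
  have hpt : ∀ x : EuclideanSpace ℝ (Fin d), ⟪v, x - emean T⟫ = ⟪v, x - μX⟫ - a := by
    intro x; rw [ha_def]; simp only [inner_sub_right]; ring
  have hα0 : (0:ℝ) ≤ |a| := abs_nonneg a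
  have hmean_val : ⟪v, emean T⟫ = (T.card : ℝ)⁻¹ * ∑ x ∈ T, ⟪v, x⟫ := by
    rw [emean, real_inner_smul_right, inner_sum]
  have hna : (T.card : ℝ) * a = ∑ x ∈ T, ⟪v, x - μX⟫ := by
    simp only [ha_def, inner_sub_right, Finset.sum_sub_distrib, Finset.sum_const,
      nsmul_eq_mul, hmean_val]
    field_simp
  -- split of the mean
  have hsplitTu : (∑ x ∈ T ∩ S, ⟪v, x - μX⟫) + ∑ x ∈ T \ S, ⟪v, x - μX⟫
      = ∑ x ∈ T, ⟪v, x - μX⟫ := Finset.sum_inter_add_sum_sdiff T S _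
  have hBu : ∑ x ∈ T \ S, ⟪v, x - μX⟫
      = (∑ x ∈ T \ S, ⟪v, x - emean T⟫) + ((T \ S).card : ℝ) * a := by
    have hc : ∀ x ∈ T \ S, ⟪v, x - μX⟫ = ⟪v, x - emean T⟫ + a := fun x _ => by
      rw [hpt]; ring
    rw [Finset.sum_congr rfl hc, Finset.sum_add_distrib, Finset.sum_const, nsmul_eq_mul]
  have hma : ((T ∩ S).card : ℝ) * a
      = (∑ x ∈ T ∩ S, ⟪v, x - μX⟫) + ∑ x ∈ T \ S, ⟪v, x - emean T⟫ := by
    have h1 : (T.card : ℝ) * a - ((T \ S).card : ℝ) * a = ((T ∩ S).card : ℝ) * a := by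
      rw [← hmbc]; ring
    linarith [hna, hsplitTu, hBu, h1]
  -- total variance
  have hT2 : ∑ x ∈ T, ⟪v, x - emean T⟫ ^ 2 = (T.card : ℝ) * (1 + lam) := by
    rw [← hvar]; field_simp
  have hBb2nn : (0:ℝ) ≤ ∑ x ∈ T \ S, ⟪v, x - emean T⟫ ^ 2 :=
    Finset.sum_nonneg fun x _ => sq_nonneg _
  have hBb2 : ∑ x ∈ T \ S, ⟪v, x - emean T⟫ ^ 2 ≤ (T.card : ℝ) * (1 + lam) := by
    rw [← hT2]
    exact Finset.sum_le_sum_of_subset_of_nonneg Finset.sdiff_subset fun x _ _ => sq_nonneg _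
  -- Cauchy-Schwarz on the bad set
  have hCS : (∑ x ∈ T \ S, ⟪v, x - emean T⟫) ^ 2
      ≤ ((T \ S).card : ℝ) * ∑ x ∈ T \ S, ⟪v, x - emean T⟫ ^ 2 := by
    have h := Finset.sum_mul_sq_le_sq_mul_sq (T \ S) (fun _ => (1:ℝ))
      (fun x => ⟪v, x - emean T⟫)
    simpa using h
  have hX2 : (∑ x ∈ T \ S, ⟪v, x - emean T⟫) ^ 2
      ≤ ε * (T.card : ℝ) * ((T.card : ℝ) * (1 + lam)) :=
    X2_bound9 hCS hBb2 hBb2nn hbcε hε.le hn.le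
  -- bound on a^2
  have hma2 : (((T ∩ S).card : ℝ) * a) ^ 2
      ≤ 2 * (δ * ((T ∩ S).card : ℝ)) ^ 2 + 2 * (ε * (T.card : ℝ) * ((T.card : ℝ) * (1 + lam))) := by
    have h1 : (∑ x ∈ T ∩ S, ⟪v, x - μX⟫) ^ 2 ≤ (δ * ((T ∩ S).card : ℝ)) ^ 2 := by
      rw [← sq_abs]
      exact pow_le_pow_left₀ (abs_nonneg _) hsA_bd 2
    exact ma2_bound9 hma h1 hX2
  have ha2 : a ^ 2 ≤ 2 * δ ^ 2 + 3 * ε * (1 + lam) :=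
    a2_bound9 hn hm1 hε hε₀ (by linarith) hma2
  -- expansion of good-set variance
  have hexpTS : ∑ x ∈ T ∩ S, ⟪v, x - emean T⟫ ^ 2
      = (∑ x ∈ T ∩ S, ⟪v, x - μX⟫ ^ 2) + (-(2 * a * ∑ x ∈ T ∩ S, ⟪v, x - μX⟫))
        + ((T ∩ S).card : ℝ) * a ^ 2 := by
    have hc : ∀ x ∈ T ∩ S, ⟪v, x - emean T⟫ ^ 2
        = ⟪v, x - μX⟫ ^ 2 - 2 * a * ⟪v, x - μX⟫ + a ^ 2 := fun x _ => by rw [hpt]; ring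
    rw [Finset.sum_congr rfl hc, Finset.sum_add_distrib, Finset.sum_sub_distrib,
      ← Finset.mul_sum, Finset.sum_const, nsmul_eq_mul]
    ring
  have hcross : -(2 * a * ∑ x ∈ T ∩ S, ⟪v, x - μX⟫) ≤ 2 * |a| * (δ * ((T ∩ S).card : ℝ)) := by
    calc -(2 * a * ∑ x ∈ T ∩ S, ⟪v, x - μX⟫) ≤ |2 * a * ∑ x ∈ T ∩ S, ⟪v, x - μX⟫| :=
          neg_le_abs _
    _ = 2 * |a| * |∑ x ∈ T ∩ S, ⟪v, x - μX⟫| := by rw [abs_mul, abs_mul, abs_two]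
    _ ≤ 2 * |a| * (δ * ((T ∩ S).card : ℝ)) :=
          mul_le_mul_of_nonneg_left hsA_bd (by positivity)
  have hTSb_up : ∑ x ∈ T ∩ S, ⟪v, x - emean T⟫ ^ 2
      ≤ (T.card : ℝ) * (1 + δ ^ 2 / ε + 2 * δ * |a| + a ^ 2) :=
    TSb_up9 hexpTS hsA2_bd.2 hcross hmn hσ2pos.le hδ0.le hα0 (sq_nonneg a)
  have hsplitTb : (∑ x ∈ T ∩ S, ⟪v, x - emean T⟫ ^ 2) + ∑ x ∈ T \ S, ⟪v, x - emean T⟫ ^ 2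
      = ∑ x ∈ T, ⟪v, x - emean T⟫ ^ 2 := Finset.sum_inter_add_sum_sdiff T S _
  have hBlow : (T.card : ℝ) * lam - (T.card : ℝ) * (δ ^ 2 / ε + 2 * δ * |a| + a ^ 2)
      ≤ ∑ x ∈ T \ S, ⟪v, x - emean T⟫ ^ 2 := by
    linarith [hsplitTb, hTSb_up, hT2]
  -- bound on the L ∩ good part
  have hRup : ∑ x ∈ (T ∩ S) ∩ L, ⟪v, x - emean T⟫ ^ 2
      ≤ (9 / 8) * (∑ x ∈ (T ∩ S) ∩ L, ⟪v, x - μX⟫ ^ 2) + (((T ∩ S) ∩ L).card : ℝ) * (9 * a ^ 2) := by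
    have hc : ∀ x ∈ (T ∩ S) ∩ L, ⟪v, x - emean T⟫ ^ 2
        ≤ (9 / 8) * ⟪v, x - μX⟫ ^ 2 + 9 * a ^ 2 := fun x _ => by
      rw [hpt]; exact ptwise9 _ _
    calc ∑ x ∈ (T ∩ S) ∩ L, ⟪v, x - emean T⟫ ^ 2
        ≤ ∑ x ∈ (T ∩ S) ∩ L, ((9 / 8) * ⟪v, x - μX⟫ ^ 2 + 9 * a ^ 2) := Finset.sum_le_sum hc
    _ = _ := by rw [Finset.sum_add_distrib, ← Finset.mul_sum, Finset.sum_const, nsmul_eq_mul]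
  have hRub2 : ∑ x ∈ (T ∩ S) ∩ L, ⟪v, x - emean T⟫ ^ 2
      ≤ (9 / 8) * (2 * (δ ^ 2 / ε) * (T.card : ℝ) + ε * (T.card : ℝ))
        + ε * (T.card : ℝ) * (9 * a ^ 2) := by
    have h1 : (((T ∩ S) ∩ L).card : ℝ) * (9 * a ^ 2) ≤ ε * (T.card : ℝ) * (9 * a ^ 2) :=
      mul_le_mul_of_nonneg_right hrcL (by positivity)
    have h2 : (9 / 8) * (∑ x ∈ (T ∩ S) ∩ L, ⟪v, x - μX⟫ ^ 2)
        ≤ (9 / 8) * (2 * (δ ^ 2 / ε) * (T.card : ℝ) + ε * (T.card : ℝ)) :=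
      mul_le_mul_of_nonneg_left hK_bd (by norm_num)
    linarith [hRup]
  -- bad-set mass below L is dominated by the R mass
  have hLne : L.Nonempty := by
    have h : (0:ℝ) < (L.card : ℝ) := by rw [hLcard]; positivity
    exact Finset.card_pos.mp (by exact_mod_cast h)
  set mL : ℝ := L.inf' hLne (fun x => ⟪v, x - emean T⟫ ^ 2) with hmL_def
  have hmL0 : 0 ≤ mL := Finset.le_inf' hLne _ fun x _ => sq_nonneg _
  have hBLsub : (T \ S) \ L ⊆ T \ L := fun y hy => by
    simp only [Finset.mem_sdiff] at hy ⊢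
    exact ⟨hy.1.1, hy.2⟩
  have hBLup : ∑ x ∈ (T \ S) \ L, ⟪v, x - emean T⟫ ^ 2 ≤ (((T \ S) \ L).card : ℝ) * mL := by
    have hc : ∀ y ∈ (T \ S) \ L, ⟪v, y - emean T⟫ ^ 2 ≤ mL := fun y hy =>
      Finset.le_inf' hLne _ fun x hx => hLtop x hx y (hBLsub hy)
    calc ∑ x ∈ (T \ S) \ L, ⟪v, x - emean T⟫ ^ 2 ≤ ∑ _x ∈ (T \ S) \ L, mL :=
          Finset.sum_le_sum hc
    _ = (((T \ S) \ L).card : ℝ) * mL := by rw [Finset.sum_const, nsmul_eq_mul]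
  have hRlow : (((T ∩ S) ∩ L).card : ℝ) * mL ≤ ∑ x ∈ (T ∩ S) ∩ L, ⟪v, x - emean T⟫ ^ 2 := by
    have h := Finset.card_nsmul_le_sum ((T ∩ S) ∩ L) (fun x => ⟪v, x - emean T⟫ ^ 2) mL
      (fun x hx => Finset.inf'_le _ (hRL hx))
    simpa [nsmul_eq_mul] using h
  -- set identities
  have hBL2 : (T \ S) ∩ L = L \ S := by
    ext x
    simp only [Finset.mem_inter, Finset.mem_sdiff]
    exact ⟨fun h => ⟨h.2, h.1.2⟩, fun h => ⟨⟨hLT h.1, h.2⟩, h.1⟩⟩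
  have hRset : L ∩ S = (T ∩ S) ∩ L := by
    ext x
    simp only [Finset.mem_inter]
    exact ⟨fun h => ⟨⟨hLT h.1, h.2⟩, h.1⟩, fun h => ⟨h.2, h.1.2⟩⟩
  -- card comparison
  have hc1 : (((T \ S) ∩ L).card : ℝ) + (((T \ S) \ L).card : ℝ) = ((T \ S).card : ℝ) := by
    exact_mod_cast Finset.card_inter_add_card_sdiff (T \ S) L
  have hc2 : ((L ∩ S).card : ℝ) + ((L \ S).card : ℝ) = (L.card : ℝ) := by
    exact_mod_cast Finset.card_inter_add_card_sdiff L S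
  have hcard_cmp : (((T \ S) \ L).card : ℝ) ≤ (((T ∩ S) ∩ L).card : ℝ) := by
    have e1 : (((T \ S) ∩ L).card : ℝ) = ((L \ S).card : ℝ) := by rw [hBL2]
    have e2 : ((L ∩ S).card : ℝ) = (((T ∩ S) ∩ L).card : ℝ) := by rw [hRset]
    linarith [hbcε, hLcard, hc1, hc2, e1, e2]
  have hBLR : ∑ x ∈ (T \ S) \ L, ⟪v, x - emean T⟫ ^ 2
      ≤ ∑ x ∈ (T ∩ S) ∩ L, ⟪v, x - emean T⟫ ^ 2 :=
    le_trans hBLup (le_trans (mul_le_mul_of_nonneg_right hcard_cmp hmL0) hRlow)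
  -- final assembly
  have hsplitL : (∑ x ∈ L ∩ S, ⟪v, x - emean T⟫ ^ 2) + ∑ x ∈ L \ S, ⟪v, x - emean T⟫ ^ 2
      = ∑ x ∈ L, ⟪v, x - emean T⟫ ^ 2 := Finset.sum_inter_add_sum_sdiff L S _
  have hsplitB2 : (∑ x ∈ (T \ S) ∩ L, ⟪v, x - emean T⟫ ^ 2)
      + ∑ x ∈ (T \ S) \ L, ⟪v, x - emean T⟫ ^ 2
      = ∑ x ∈ T \ S, ⟪v, x - emean T⟫ ^ 2 := Finset.sum_inter_add_sum_sdiff (T \ S) L _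
  have e1 : ∑ x ∈ L ∩ S, ⟪v, x - emean T⟫ ^ 2 = ∑ x ∈ (T ∩ S) ∩ L, ⟪v, x - emean T⟫ ^ 2 := by
    rw [hRset]
  have e2 : ∑ x ∈ (T \ S) ∩ L, ⟪v, x - emean T⟫ ^ 2 = ∑ x ∈ L \ S, ⟪v, x - emean T⟫ ^ 2 := by
    rw [hBL2]
  have h2R : 2 * ∑ x ∈ (T ∩ S) ∩ L, ⟪v, x - emean T⟫ ^ 2
      ≤ ∑ x ∈ T \ S, ⟪v, x - emean T⟫ ^ 2 :=
    final9 hε hε₀ hcδ hn hlam' hRub2 hBlow hα0 (sq_abs a).symm ha2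
  linarith [hBLR, hsplitL, hsplitB2, e1, e2, h2R]
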